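/- (Minimax exchange.) Let Ξ = { ξ ∈ ℝ^A : ξ ≥ 0, Σ_{a ∈ A} ξ_a ≤ κ }. Then max_{d ∈ Δ^A} min_{ξ ∈ Ξ} Σ_{a ∈ A} d_a · q_a(ξ_a) = min_{ξ ∈ Ξ} max_{a ∈ A} q_a(ξ_a). -/

import Mathlib

open Finset

/-- The feasible value set defining `q`. -/
def sRectVset {S : Type*} [Fintype S] (z w pbar : S → ℝ) (ξ : ℝ) : Set ℝ :=
  (fun p : S → ℝ => ∑ i, z i * p i) ''
    {p | p ∈ stdSimplex ℝ S ∧ ∑ i, w i * |p i - pbar i| ≤ ξ}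

lemma sRect_dot_bound {S : Type*} [Fintype S] (z p : S → ℝ)
    (hp : p ∈ stdSimplex ℝ S) : |∑ i, z i * p i| ≤ ∑ i, |z i| := by
  calc |∑ i, z i * p i| ≤ ∑ i, |z i * p i| := Finset.abs_sum_le_sum_abs _ _
    _ ≤ ∑ i, |z i| := by
        apply Finset.sum_le_sum
        intro i _
        rw [abs_mul, abs_of_nonneg (hp.1 i)]
        have hp1 : p i ≤ 1 := by
          have := Finset.single_le_sum (f := p) (fun j _ => hp.1 j) (Finset.mem_univ i)
          simpa [hp.2] using this
        nlinarith [abs_nonneg (z i), hp.1 i]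

lemma sRectVset_nonempty {S : Type*} [Fintype S] (z w pbar : S → ℝ)
    (hpbar : pbar ∈ stdSimplex ℝ S) {ξ : ℝ} (hξ : 0 ≤ ξ) :
    (sRectVset z w pbar ξ).Nonempty :=
  ⟨_, ⟨pbar, ⟨hpbar, by simpa using hξ⟩, rfl⟩⟩

lemma sRectVset_bddBelow {S : Type*} [Fintype S] (z w pbar : S → ℝ) (ξ : ℝ) :
    BddBelow (sRectVset z w pbar ξ) := by
  refine ⟨-(∑ i, |z i|), ?_⟩
  rintro x ⟨p, hp, rfl⟩
  have := sRect_dot_bound z p hp.1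
  exact neg_le_of_abs_le this

lemma sRectVset_le {S : Type*} [Fintype S] (z w pbar : S → ℝ)
    (hpbar : pbar ∈ stdSimplex ℝ S) {ξ : ℝ} (hξ : 0 ≤ ξ) :
    sInf (sRectVset z w pbar ξ) ≤ ∑ i, |z i| := by
  refine le_trans (csInf_le (sRectVset_bddBelow z w pbar ξ)
    ⟨pbar, ⟨hpbar, by simpa using hξ⟩, rfl⟩) ?_
  exact le_of_abs_le (sRect_dot_bound z pbar hpbar)

lemma sRectVset_ge {S : Type*} [Fintype S] (z w pbar : S → ℝ)
    (hpbar : pbar ∈ stdSimplex ℝ S) {ξ : ℝ} (hξ : 0 ≤ ξ) :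
    -(∑ i, |z i|) ≤ sInf (sRectVset z w pbar ξ) := by
  apply le_csInf (sRectVset_nonempty z w pbar hpbar hξ)
  rintro x ⟨p, hp, rfl⟩
  exact neg_le_of_abs_le (sRect_dot_bound z p hp.1)

/-- Convexity of `q` (on the nonnegative reals). -/
lemma sRectVset_convex {S : Type*} [Fintype S] (z w pbar : S → ℝ)
    (hpbar : pbar ∈ stdSimplex ℝ S) (hw : ∀ i, 0 < w i)
    {ξ1 ξ2 t s : ℝ} (hξ1 : 0 ≤ ξ1) (hξ2 : 0 ≤ ξ2)
    (ht : 0 ≤ t) (hs : 0 ≤ s) (hts : t + s = 1) :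
    sInf (sRectVset z w pbar (t * ξ1 + s * ξ2)) ≤
      t * sInf (sRectVset z w pbar ξ1) + s * sInf (sRectVset z w pbar ξ2) := by
  apply le_of_forall_pos_le_add
  intro ε hε
  obtain ⟨x1, ⟨p1, hp1, rfl⟩, hx1⟩ :=
    Real.lt_sInf_add_pos (sRectVset_nonempty z w pbar hpbar hξ1) hε
  obtain ⟨x2, ⟨p2, hp2, rfl⟩, hx2⟩ :=
    Real.lt_sInf_add_pos (sRectVset_nonempty z w pbar hpbar hξ2) hε
  set p : S → ℝ := fun i => t * p1 i + s * p2 i with hpdef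
  have hpsimp : p ∈ stdSimplex ℝ S := by
    have := (convex_stdSimplex ℝ S) hp1.1 hp2.1 ht hs hts
    convert this using 1; ext i; simp [hpdef]
  have hbudget : ∑ i, w i * |p i - pbar i| ≤ t * ξ1 + s * ξ2 := by
    have key : ∀ i, w i * |p i - pbar i| ≤
        t * (w i * |p1 i - pbar i|) + s * (w i * |p2 i - pbar i|) := by
      intro i
      have habs : |p i - pbar i| ≤ t * |p1 i - pbar i| + s * |p2 i - pbar i| := by
        have : p i - pbar i = t * (p1 i - pbar i) + s * (p2 i - pbar i) := by
          simp only [hpdef]; linear_combination pbar i * hts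
        rw [this]
        calc |t * (p1 i - pbar i) + s * (p2 i - pbar i)|
            ≤ |t * (p1 i - pbar i)| + |s * (p2 i - pbar i)| := abs_add_le _ _
          _ = t * |p1 i - pbar i| + s * |p2 i - pbar i| := by
              rw [abs_mul, abs_mul, abs_of_nonneg ht, abs_of_nonneg hs]
      nlinarith [mul_le_mul_of_nonneg_left habs (le_of_lt (hw i))]
    calc ∑ i, w i * |p i - pbar i|
        ≤ ∑ i, (t * (w i * |p1 i - pbar i|) + s * (w i * |p2 i - pbar i|)) :=
          Finset.sum_le_sum fun i _ => key i
      _ = t * (∑ i, w i * |p1 i - pbar i|) + s * (∑ i, w i * |p2 i - pbar i|) := by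
          rw [Finset.sum_add_distrib, ← Finset.mul_sum, ← Finset.mul_sum]
      _ ≤ t * ξ1 + s * ξ2 := by
          have h1 := mul_le_mul_of_nonneg_left hp1.2 ht
          have h2 := mul_le_mul_of_nonneg_left hp2.2 hs
          linarith
  have hval : ∑ i, z i * p i = t * (∑ i, z i * p1 i) + s * (∑ i, z i * p2 i) := by
    rw [Finset.mul_sum, Finset.mul_sum, ← Finset.sum_add_distrib]
    apply Finset.sum_congr rfl
    intro i _
    simp only [hpdef]; ring
  have hmem : (∑ i, z i * p i) ∈ sRectVset z w pbar (t * ξ1 + s * ξ2) :=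
    ⟨p, ⟨hpsimp, hbudget⟩, rfl⟩
  calc sInf (sRectVset z w pbar (t * ξ1 + s * ξ2))
      ≤ ∑ i, z i * p i := csInf_le (sRectVset_bddBelow z w pbar _) hmem
    _ = t * (∑ i, z i * p1 i) + s * (∑ i, z i * p2 i) := hval
    _ ≤ t * (sInf (sRectVset z w pbar ξ1) + ε) + s * (sInf (sRectVset z w pbar ξ2) + ε) := by
        have h1 := mul_le_mul_of_nonneg_left (le_of_lt hx1) ht
        have h2 := mul_le_mul_of_nonneg_left (le_of_lt hx2) hs
        linarith
    _ = t * sInf (sRectVset z w pbar ξ1) + s * sInf (sRectVset z w pbar ξ2) + ε := by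
        nlinarith [hts]

/-- Minimax exchange. With `Ξ = {ξ ≥ 0 : Σ_a ξ_a ≤ κ}`,
`max_{d ∈ Δ^A} min_{ξ ∈ Ξ} Σ_a d_a q_a(ξ_a) = min_{ξ ∈ Ξ} max_a q_a(ξ_a)`. -/
theorem s_rectangular_minimax_exchange
    {S A : Type*} [Fintype S] [Nonempty S] [Fintype A] [Nonempty A]
    (z : A → S → ℝ) (pbar : A → S → ℝ) (hpbar : ∀ a, pbar a ∈ stdSimplex ℝ S)
    (w : A → S → ℝ) (hw : ∀ a i, 0 < w a i)
    (κ : ℝ) (hκ : 0 ≤ κ)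
    (q : A → ℝ → ℝ)
    (hq : ∀ (a : A) (ξ : ℝ), q a ξ =
      sInf ((fun p : S → ℝ => ∑ i, z a i * p i) ''
        {p | p ∈ stdSimplex ℝ S ∧ ∑ i, w a i * |p i - pbar a i| ≤ ξ}))
    (Ξ : Set (A → ℝ))
    (hΞ : Ξ = {ξ : A → ℝ | (∀ a, 0 ≤ ξ a) ∧ ∑ a, ξ a ≤ κ}) :
    sSup ((fun d : A → ℝ =>
        sInf ((fun ξ : A → ℝ => ∑ a, d a * q a (ξ a)) '' Ξ)) '' stdSimplex ℝ A)
      = sInf ((fun ξ : A → ℝ => ⨆ a, q a (ξ a)) '' Ξ) := by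
  classical
  subst hΞ
  set Ξ : Set (A → ℝ) := {ξ : A → ℝ | (∀ a, 0 ≤ ξ a) ∧ ∑ a, ξ a ≤ κ} with hΞdef
  have hq' : ∀ a ξ, q a ξ = sInf (sRectVset (z a) (w a) (pbar a) ξ) := fun a ξ => hq a ξ
  set M : A → ℝ := fun a => ∑ i, |z a i| with hMdef
  have hM0 : ∀ a, 0 ≤ M a := fun a => Finset.sum_nonneg fun i _ => abs_nonneg _
  set B : ℝ := ∑ a, M a with hBdef
  have hMB : ∀ a, M a ≤ B :=
    fun a => Finset.single_le_sum (f := M) (fun b _ => hM0 b) (Finset.mem_univ a)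
  have hB0 : 0 ≤ B := Finset.sum_nonneg fun a _ => hM0 a
  have hqle : ∀ a (ξ : ℝ), 0 ≤ ξ → q a ξ ≤ M a := by
    intro a ξ hξ; rw [hq']; exact sRectVset_le _ _ _ (hpbar a) hξ
  have hqge : ∀ a (ξ : ℝ), 0 ≤ ξ → -B ≤ q a ξ := by
    intro a ξ hξ; rw [hq']
    refine le_trans ?_ (sRectVset_ge _ _ _ (hpbar a) hξ)
    simpa using hMB a
  have hqcvx : ∀ a {ξ1 ξ2 t s : ℝ}, 0 ≤ ξ1 → 0 ≤ ξ2 → 0 ≤ t → 0 ≤ s → t + s = 1 →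
      q a (t * ξ1 + s * ξ2) ≤ t * q a ξ1 + s * q a ξ2 := by
    intro a ξ1 ξ2 t s hξ1 hξ2 ht hs hts
    rw [hq', hq', hq']
    exact sRectVset_convex _ _ _ (hpbar a) (hw a) hξ1 hξ2 ht hs hts
  -- the zero budget is in Ξ
  have hΞ0 : (0 : A → ℝ) ∈ Ξ := ⟨fun a => le_rfl, by simpa using hκ⟩
  -- abbreviations
  set R : Set ℝ := (fun ξ : A → ℝ => ⨆ a, q a (ξ a)) '' Ξ with hRdef
  have hRne : R.Nonempty := ⟨_, ⟨0, hΞ0, rfl⟩⟩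
  have hbdd_range : ∀ ξ : A → ℝ, BddAbove (Set.range fun a => q a (ξ a)) :=
    fun ξ => Set.Finite.bddAbove (Set.finite_range _)
  have hRlow : ∀ r ∈ R, -B ≤ r := by
    rintro r ⟨ξ, hξ, rfl⟩
    obtain ⟨a0⟩ := ‹Nonempty A›
    exact le_trans (hqge a0 (ξ a0) (hξ.1 a0)) (le_ciSup (hbdd_range ξ) a0)
  have hRbdd : BddBelow R := ⟨-B, hRlow⟩
  set v : ℝ := sInf R with hvdef
  -- inner sets for a given d
  have hinner_ne : ∀ d : A → ℝ,
      ((fun ξ : A → ℝ => ∑ a, d a * q a (ξ a)) '' Ξ).Nonempty :=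
    fun d => ⟨_, ⟨0, hΞ0, rfl⟩⟩
  have hinner_bdd : ∀ d : A → ℝ, d ∈ stdSimplex ℝ A →
      BddBelow ((fun ξ : A → ℝ => ∑ a, d a * q a (ξ a)) '' Ξ) := by
    intro d hd
    refine ⟨-B, ?_⟩
    rintro x ⟨ξ, hξ, rfl⟩
    have h1 : ∀ a, d a * (-B) ≤ d a * q a (ξ a) :=
      fun a => mul_le_mul_of_nonneg_left (hqge a (ξ a) (hξ.1 a)) (hd.1 a)
    calc -B = (∑ a, d a) * (-B) := by rw [hd.2, one_mul]
      _ = ∑ a, d a * (-B) := Finset.sum_mul _ _ _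
      _ ≤ ∑ a, d a * q a (ξ a) := Finset.sum_le_sum fun a _ => h1 a
  have houter_bdd : BddAbove ((fun d : A → ℝ =>
      sInf ((fun ξ : A → ℝ => ∑ a, d a * q a (ξ a)) '' Ξ)) '' stdSimplex ℝ A) := by
    refine ⟨B, ?_⟩
    rintro x ⟨d, hd, rfl⟩
    have hmem : (∑ a, d a * q a ((0 : A → ℝ) a)) ∈
        (fun ξ : A → ℝ => ∑ a, d a * q a (ξ a)) '' Ξ := ⟨0, hΞ0, rfl⟩
    refine le_trans (csInf_le (hinner_bdd d hd) hmem) ?_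
    calc ∑ a, d a * q a ((0 : A → ℝ) a) ≤ ∑ a, d a * B := by
          apply Finset.sum_le_sum
          intro a _
          exact mul_le_mul_of_nonneg_left
            (le_trans (hqle a 0 le_rfl) (hMB a)) (hd.1 a)
      _ = B := by rw [← Finset.sum_mul, hd.2, one_mul]
  -- Easy direction: LHS ≤ RHS
  have heasy : sSup ((fun d : A → ℝ =>
      sInf ((fun ξ : A → ℝ => ∑ a, d a * q a (ξ a)) '' Ξ)) '' stdSimplex ℝ A) ≤ v := by
    apply csSup_le
    · obtain ⟨a0⟩ := ‹Nonempty A›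
      refine ⟨_, ⟨fun a => if a = a0 then 1 else 0, ⟨?_, ?_⟩, rfl⟩⟩
      · intro a; dsimp only; split <;> norm_num
      · simp
    · rintro x ⟨d, hd, rfl⟩
      apply le_csInf hRne
      rintro r ⟨ξ, hξ, rfl⟩
      refine le_trans (csInf_le (hinner_bdd d hd) ⟨ξ, hξ, rfl⟩) ?_
      calc ∑ a, d a * q a (ξ a) ≤ ∑ a, d a * (⨆ b, q b (ξ b)) := by
            apply Finset.sum_le_sum
            intro a _
            exact mul_le_mul_of_nonneg_left (le_ciSup (hbdd_range ξ) a) (hd.1 a)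
        _ = ⨆ b, q b (ξ b) := by rw [← Finset.sum_mul, hd.2, one_mul]
  -- Hard direction via separation.
  set C : Set (A → ℝ) := {y | ∃ ξ ∈ Ξ, ∀ a, q a (ξ a) ≤ y a} with hCdef
  set O : Set (A → ℝ) := {u | ∀ a, u a < v} with hOdef
  have hy0 : (fun a => q a 0) ∈ C := ⟨0, hΞ0, fun a => le_rfl⟩
  have hOopen : IsOpen O := by
    have : O = ⋂ a, (fun u : A → ℝ => u a) ⁻¹' Set.Iio v := by
      ext u; simp [hOdef, Set.mem_iInter]
    rw [this]
    exact isOpen_iInter_of_finite fun a => (continuous_apply a).isOpen_preimage _ isOpen_Iio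
  have hOconv : Convex ℝ O := by
    rintro x hx y hy t s ht hs hts
    intro a
    have h1 := hx a
    have h2 := hy a
    simp only [Pi.add_apply, Pi.smul_apply, smul_eq_mul]
    rcases eq_or_lt_of_le ht with h | h
    · have hs1 : s = 1 := by linarith
      rw [← h, hs1]; simpa using h2
    · have hv : t * v + s * v = v := by linear_combination v * hts
      have ha := mul_le_mul_of_nonneg_left (le_of_lt h2) hs
      have hb := mul_lt_mul_of_pos_left h1 h
      linarith
  have hCconv : Convex ℝ C := by
    rintro y1 ⟨ξ1, hξ1, hy1⟩ y2 ⟨ξ2, hξ2, hy2⟩ t s ht hs hts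
    refine ⟨t • ξ1 + s • ξ2, ⟨?_, ?_⟩, ?_⟩
    · intro a
      simp only [Pi.add_apply, Pi.smul_apply, smul_eq_mul]
      have := hξ1.1 a; have := hξ2.1 a
      positivity
    · simp only [Pi.add_apply, Pi.smul_apply, smul_eq_mul, Finset.sum_add_distrib,
        ← Finset.mul_sum]
      nlinarith [mul_le_mul_of_nonneg_left hξ1.2 ht, mul_le_mul_of_nonneg_left hξ2.2 hs]
    · intro a
      simp only [Pi.add_apply, Pi.smul_apply, smul_eq_mul]
      calc q a (t * ξ1 a + s * ξ2 a) ≤ t * q a (ξ1 a) + s * q a (ξ2 a) :=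
            hqcvx a (hξ1.1 a) (hξ2.1 a) ht hs hts
        _ ≤ t * y1 a + s * y2 a := by
            have h1 := mul_le_mul_of_nonneg_left (hy1 a) ht
            have h2 := mul_le_mul_of_nonneg_left (hy2 a) hs
            linarith
  have hdisj : Disjoint O C := by
    rw [Set.disjoint_left]
    rintro y hyO ⟨ξ, hξ, hy⟩
    have hvle : v ≤ ⨆ a, q a (ξ a) := csInf_le hRbdd ⟨ξ, hξ, rfl⟩
    obtain ⟨a0, ha0⟩ := Finite.exists_max (fun a => q a (ξ a))
    have : (⨆ a, q a (ξ a)) ≤ q a0 (ξ a0) := ciSup_le ha0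
    have := hy a0
    have := hyO a0
    linarith
  obtain ⟨f, u, hfO, hfC⟩ := geometric_hahn_banach_open hOconv hOopen hCconv hdisj
  set e : A → (A → ℝ) := fun a j => if a = j then (1 : ℝ) else 0 with hedef
  set d : A → ℝ := fun a => f (e a) with hddef
  have hf : ∀ y : A → ℝ, f y = ∑ a, y a * d a := by
    intro y
    conv_lhs => rw [pi_eq_sum_univ y]
    rw [map_sum]
    apply Finset.sum_congr rfl
    intro a _
    rw [map_smul]
    simp [hddef, hedef, smul_eq_mul]
  have hfy0 : u ≤ f (fun a => q a 0) := hfC _ hy0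
  -- d is nonnegative
  have hd0 : ∀ a, 0 ≤ d a := by
    intro a0
    by_contra hda
    push_neg at hda
    set t : ℝ := (f (fun a => q a 0) - u + 1) / (-d a0) with htdef
    have ht0 : 0 < t := div_pos (by linarith) (by linarith)
    have hyC : (fun a => q a 0) + t • e a0 ∈ C := by
      refine ⟨0, hΞ0, fun a => ?_⟩
      simp only [Pi.add_apply, Pi.smul_apply, smul_eq_mul, hedef]
      have : (0:ℝ) ≤ t * (if a0 = a then (1:ℝ) else 0) := by
        apply mul_nonneg ht0.le; split <;> norm_num
      simp only [Pi.zero_apply]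
      linarith
    have hfe : f ((fun a => q a 0) + t • e a0) = f (fun a => q a 0) + t * d a0 := by
      rw [map_add, map_smul, smul_eq_mul, hddef]
    have hne : d a0 ≠ 0 := ne_of_lt hda
    have htd : t * d a0 = -(f (fun a => q a 0) - u + 1) := by
      have h1 : -d a0 ≠ 0 := neg_ne_zero.mpr hne
      have h2 : t * (-d a0) = f (fun a => q a 0) - u + 1 := by
        rw [htdef]; exact div_mul_cancel₀ _ h1
      linear_combination -h2
    have := hfC _ hyC
    rw [hfe, htd] at this
    linarith
  set T : ℝ := ∑ a, d a with hTdef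
  have hT0' : 0 ≤ T := Finset.sum_nonneg fun a _ => hd0 a
  have hOval : ∀ ε : ℝ, 0 < ε → (v - ε) * T < u := by
    intro ε hε
    have hmem : (fun _ : A => v - ε) ∈ O := by
      intro a
      show v - ε < v
      linarith
    have := hfO _ hmem
    rw [hf] at this
    calc (v - ε) * T = ∑ a, (v - ε) * d a := Finset.mul_sum _ _ _
      _ < u := this
  have hT0 : 0 < T := by
    rcases lt_or_eq_of_le hT0' with h | h
    · exact h
    · exfalso
      have hall : ∀ a, d a = 0 := by
        intro a
        have := (Finset.sum_eq_zero_iff_of_nonneg (fun a _ => hd0 a)).1 h.symm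
        exact this a (Finset.mem_univ a)
      have h1 : (0:ℝ) < u := by
        have := hOval 1 one_pos
        rw [← h] at this
        simpa using this
      have h2 : u ≤ 0 := by
        have := hfy0
        rw [hf] at this
        simp only [hall, mul_zero, Finset.sum_const_zero] at this
        exact this
      linarith
  have hvT : v * T ≤ u := by
    by_contra hcon
    push_neg at hcon
    have := hOval ((v * T - u) / T) (by apply div_pos <;> linarith)
    have heq : (v - (v * T - u) / T) * T = u := by field_simp; ring
    linarith
  set d' : A → ℝ := fun a => d a / T with hd'def
  have hd'simp : d' ∈ stdSimplex ℝ A := by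
    refine ⟨fun a => div_nonneg (hd0 a) hT0', ?_⟩
    simp only [hd'def, ← Finset.sum_div, ← hTdef]
    field_simp
  have hkey : ∀ ξ ∈ Ξ, v ≤ ∑ a, d' a * q a (ξ a) := by
    intro ξ hξ
    have hyC : (fun a => q a (ξ a)) ∈ C := ⟨ξ, hξ, fun a => le_rfl⟩
    have h1 : u ≤ ∑ a, q a (ξ a) * d a := by
      have := hfC _ hyC
      rwa [hf] at this
    have h2 : ∑ a, d' a * q a (ξ a) = (∑ a, q a (ξ a) * d a) / T := by
      rw [Finset.sum_div]
      apply Finset.sum_congr rfl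
      intro a _
      rw [hd'def]; ring
    rw [h2, le_div_iff₀ hT0]
    linarith
  have hhard : v ≤ sSup ((fun d : A → ℝ =>
      sInf ((fun ξ : A → ℝ => ∑ a, d a * q a (ξ a)) '' Ξ)) '' stdSimplex ℝ A) := by
    have h1 : v ≤ sInf ((fun ξ : A → ℝ => ∑ a, d' a * q a (ξ a)) '' Ξ) := by
      apply le_csInf (hinner_ne d')
      rintro x ⟨ξ, hξ, rfl⟩
      exact hkey ξ hξ
    exact le_trans h1 (le_csSup houter_bdd ⟨d', hd'simp, rfl⟩)
  exact le_antisymm heasy hhard
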